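/- The natural HNN extension of the cyclically presented group G_n(w) is isomorphic to the two-generator group with presentation ⟨a, c | W(a,c), [a, c^n]⟩, where W(a,c) = w(ac⁻¹, cac⁻², c²ac⁻³, …, c^{n-1}ac⁻ⁿ). -/

import Mathlib

/-- The shift endomorphism `θ` of the free group on `ZMod n`, sending `x_i` to `x_{i+1}`. -/
def shiftEnd (n : ℕ) [NeZero n] : Monoid.End (FreeGroup (ZMod n)) :=
  FreeGroup.lift fun i => FreeGroup.of (i + 1)

/-- The relators `w, θ(w), …, θ^{n-1}(w)` of the cyclic presentation `G_n(w)`. -/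
def cycRels (n : ℕ) [NeZero n] (w : FreeGroup (ZMod n)) : Set (FreeGroup (ZMod n)) :=
  Set.range fun j : ZMod n => (shiftEnd n ^ j.val) w

/-- The cyclically presented group `G_n(w)`. -/
abbrev Gn (n : ℕ) [NeZero n] (w : FreeGroup (ZMod n)) := PresentedGroup (cycRels n w)

/-- Generators of the two-generator presentation: `a` and `c`. -/
def agen : FreeGroup Bool := FreeGroup.of true
def cgen : FreeGroup Bool := FreeGroup.of false

/-- `W(a,c) = w(ac⁻¹, cac⁻², c²ac⁻³, …, c^{n-1}ac⁻ⁿ)`. -/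
def Wword (n : ℕ) [NeZero n] (w : FreeGroup (ZMod n)) : FreeGroup Bool :=
  FreeGroup.lift (fun i : ZMod n => cgen ^ i.val * agen * (cgen ^ (i.val + 1))⁻¹) w

/-- The relators of the presentation `⟨a, c ∣ W(a,c), [a,cⁿ]⟩`. -/
def twoGenRels (n : ℕ) [NeZero n] (w : FreeGroup (ZMod n)) : Set (FreeGroup Bool) :=
  {Wword n w, agen⁻¹ * (cgen ^ n)⁻¹ * agen * cgen ^ n}

namespace HNNAux

variable (n : ℕ) [NeZero n] (w : FreeGroup (ZMod n))

/-- `a` in the two-generator group. -/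
def ta : PresentedGroup (twoGenRels n w) := PresentedGroup.of true
/-- `c` in the two-generator group. -/
def tc : PresentedGroup (twoGenRels n w) := PresentedGroup.of false

lemma rel_one {r : FreeGroup Bool} (hr : r ∈ twoGenRels n w) :
    PresentedGroup.mk (twoGenRels n w) r = 1 :=
  (QuotientGroup.eq_one_iff r).mpr (Subgroup.subset_normalClosure hr)

lemma hac : ta n w * (tc n w) ^ n = (tc n w) ^ n * ta n w := by
  have h := rel_one n w (r := agen⁻¹ * (cgen ^ n)⁻¹ * agen * cgen ^ n)
    (Set.mem_insert_iff.mpr (Or.inr rfl))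
  simp only [map_mul, map_inv, map_pow] at h
  have h : (ta n w)⁻¹ * ((tc n w) ^ n)⁻¹ * ta n w * (tc n w) ^ n = 1 := h
  have h2 : (ta n w)⁻¹ * (((tc n w) ^ n)⁻¹ * (ta n w * (tc n w) ^ n)) = 1 := by
    rw [← h]; group
  have h3 := inv_mul_eq_one.mp h2
  calc ta n w * (tc n w) ^ n = (tc n w) ^ n * (((tc n w) ^ n)⁻¹ * (ta n w * (tc n w) ^ n)) := by
        group
    _ = (tc n w) ^ n * ta n w := by rw [← h3]

/-- The key word map into the two-generator group. -/
def Lmap : FreeGroup (ZMod n) →* PresentedGroup (twoGenRels n w) :=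
  FreeGroup.lift fun i : ZMod n => tc n w ^ i.val * ta n w * (tc n w ^ (i.val + 1))⁻¹

lemma Lmap_of (i : ZMod n) :
    Lmap n w (FreeGroup.of i) = tc n w ^ i.val * ta n w * (tc n w ^ (i.val + 1))⁻¹ :=
  FreeGroup.lift_apply_of

/-- The key index computation. -/
lemma key (i : ZMod n) :
    tc n w ^ (i + 1).val * ta n w * (tc n w ^ ((i + 1).val + 1))⁻¹ =
      tc n w * (tc n w ^ i.val * ta n w * (tc n w ^ (i.val + 1))⁻¹) * (tc n w)⁻¹ := by
  have hi : i.val < n := ZMod.val_lt i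
  have hcast : ((i.val + 1 : ℕ) : ZMod n) = i + 1 := by
    push_cast [ZMod.natCast_val, ZMod.cast_id]
    ring
  rcases lt_or_eq_of_le (Nat.succ_le_of_lt hi) with hlt | heq
  · have hlt : i.val + 1 < n := hlt
    have hval : (i + 1).val = i.val + 1 := by
      rw [← hcast, ZMod.val_cast_of_lt hlt]
    rw [hval]; group
  · -- wrap-around: i.val + 1 = n
    have heq : i.val + 1 = n := heq
    have hval : (i + 1).val = 0 := by
      rw [← hcast, heq, ZMod.natCast_self, ZMod.val_zero]
    have hiv : i.val = n - 1 := by omega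
    have hn : n - 1 + 1 = n := by omega
    have hpow : tc n w * tc n w ^ (n - 1) = tc n w ^ n := by rw [← pow_succ', hn]
    rw [hval, hiv, hn]
    calc tc n w ^ 0 * ta n w * (tc n w ^ (0 + 1))⁻¹ = ta n w * (tc n w)⁻¹ := by group
      _ = ta n w * tc n w ^ n * (tc n w ^ n)⁻¹ * (tc n w)⁻¹ := by group
      _ = tc n w ^ n * ta n w * (tc n w ^ n)⁻¹ * (tc n w)⁻¹ := by rw [hac]
      _ = tc n w * tc n w ^ (n - 1) * ta n w * (tc n w ^ n)⁻¹ * (tc n w)⁻¹ := by rw [hpow]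
      _ = tc n w * (tc n w ^ (n - 1) * ta n w * (tc n w ^ n)⁻¹) * (tc n w)⁻¹ := by
          simp [mul_assoc]

lemma Lmap_shift (u : FreeGroup (ZMod n)) :
    Lmap n w (shiftEnd n u) = tc n w * Lmap n w u * (tc n w)⁻¹ := by
  have : (Lmap n w).comp (shiftEnd n : FreeGroup (ZMod n) →* FreeGroup (ZMod n)) =
      ((MulAut.conj (tc n w)).toMonoidHom.comp (Lmap n w)) := by
    apply FreeGroup.ext_hom
    intro i
    show Lmap n w (shiftEnd n (FreeGroup.of i)) =
      tc n w * Lmap n w (FreeGroup.of i) * (tc n w)⁻¹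
    have hsh : shiftEnd n (FreeGroup.of i) = FreeGroup.of (i + 1) := FreeGroup.lift_apply_of
    rw [hsh, Lmap_of, Lmap_of, key]
  have h := DFunLike.congr_fun this u
  exact h

lemma Lmap_shift_pow (k : ℕ) (u : FreeGroup (ZMod n)) :
    Lmap n w ((shiftEnd n ^ k) u) = tc n w ^ k * Lmap n w u * (tc n w ^ k)⁻¹ := by
  induction k generalizing u with
  | zero => simp
  | succ k ih =>
    have : (shiftEnd n ^ (k + 1)) u = (shiftEnd n ^ k) (shiftEnd n u) := by
      rw [pow_succ]; rfl
    rw [this, ih, Lmap_shift]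
    group

lemma Lmap_w : Lmap n w w = 1 := by
  have h := rel_one n w (r := Wword n w) (Set.mem_insert _ _)
  have : PresentedGroup.mk (twoGenRels n w) (Wword n w) = Lmap n w w := by
    have hcomp : (PresentedGroup.mk (twoGenRels n w)).comp
        (FreeGroup.lift fun i : ZMod n =>
          cgen ^ i.val * agen * (cgen ^ (i.val + 1))⁻¹) = Lmap n w := by
      apply FreeGroup.ext_hom
      intro i
      simp only [MonoidHom.comp_apply, FreeGroup.lift_apply_of, map_mul, map_inv, map_pow]
      rw [Lmap_of]
      rfl
    exact DFunLike.congr_fun hcomp w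
  rw [← this, h]

lemma Lmap_rels : ∀ r ∈ cycRels n w,
    (FreeGroup.lift fun i : ZMod n =>
      tc n w ^ i.val * ta n w * (tc n w ^ (i.val + 1))⁻¹) r = 1 := by
  rintro r ⟨j, rfl⟩
  show Lmap n w ((shiftEnd n ^ j.val) w) = 1
  rw [Lmap_shift_pow, Lmap_w]
  group

/-- The homomorphism `G_n(w) →* ⟨a,c⟩`. -/
def psiG : Gn n w →* PresentedGroup (twoGenRels n w) :=
  PresentedGroup.toGroup (Lmap_rels n w)

lemma psiG_of (i : ZMod n) :
    psiG n w (PresentedGroup.of i) = tc n w ^ i.val * ta n w * (tc n w ^ (i.val + 1))⁻¹ :=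
  PresentedGroup.toGroup.of _

section WithPhi

variable (φ : MulAut (Gn n w))

lemma psiG_conj (hφ : ∀ i : ZMod n, φ (PresentedGroup.of i) = PresentedGroup.of (i + 1))
    (g : Gn n w) : psiG n w (φ g) = tc n w * psiG n w g * (tc n w)⁻¹ := by
  have hcomp : (psiG n w).comp φ.toMonoidHom =
      (MulAut.conj (tc n w)).toMonoidHom.comp (psiG n w) := by
    apply PresentedGroup.ext
    intro i
    show psiG n w (φ (PresentedGroup.of i)) =
      tc n w * psiG n w (PresentedGroup.of i) * (tc n w)⁻¹
    rw [hφ, psiG_of, psiG_of, key]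
  simpa using DFunLike.congr_fun hcomp g

lemma psiG_conj_inv (hφ : ∀ i : ZMod n, φ (PresentedGroup.of i) = PresentedGroup.of (i + 1))
    (g : Gn n w) : psiG n w (φ⁻¹ g) = (tc n w)⁻¹ * psiG n w g * tc n w := by
  have h := psiG_conj n w φ hφ (φ⁻¹ g)
  rw [MulAut.apply_inv_self] at h
  rw [h]; group

lemma psiG_conj_zpow (hφ : ∀ i : ZMod n, φ (PresentedGroup.of i) = PresentedGroup.of (i + 1))
    (m : ℤ) (g : Gn n w) :
    psiG n w ((φ ^ m) g) = tc n w ^ m * psiG n w g * (tc n w ^ m)⁻¹ := by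
  induction m using Int.induction_on generalizing g with
  | zero => simp
  | succ k ih =>
    have hsplit : (φ ^ ((k : ℤ) + 1)) g = (φ ^ (k : ℤ)) (φ g) := by
      rw [zpow_add, zpow_one, MulAut.mul_apply]
    rw [hsplit, ih, psiG_conj n w φ hφ]
    group
  | pred k ih =>
    have hsplit : (φ ^ (-(k : ℤ) - 1)) g = (φ ^ (-(k : ℤ))) (φ⁻¹ g) := by
      rw [sub_eq_add_neg, zpow_add, zpow_neg_one, MulAut.mul_apply]
    rw [hsplit, ih, psiG_conj_inv n w φ hφ]
    group

/-- The natural HNN extension as a semidirect product. -/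
abbrev Ghat := Gn n w ⋊[zpowersHom (MulAut (Gn n w)) φ] Multiplicative ℤ

/-- The stable letter. -/
def Tg : Ghat n w φ := SemidirectProduct.inr (Multiplicative.ofAdd 1)

/-- The images of the two generators `a`, `c` in the HNN extension. -/
def fmap : Bool → Ghat n w φ := fun b =>
  if b then SemidirectProduct.inl (PresentedGroup.of (0 : ZMod n)) * Tg n w φ else Tg n w φ

lemma hφpow (hφ : ∀ i : ZMod n, φ (PresentedGroup.of i) = PresentedGroup.of (i + 1))
    (k : ℕ) (i : ZMod n) : (φ ^ k) (PresentedGroup.of i) = PresentedGroup.of (i + k) := by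
  induction k generalizing i with
  | zero => simp
  | succ k ih =>
    rw [pow_succ, MulAut.mul_apply, hφ, ih]
    congr 1
    push_cast
    ring

lemma Tg_pow (k : ℕ) : Tg n w φ ^ k = SemidirectProduct.inr (Multiplicative.ofAdd (k : ℤ)) := by
  rw [Tg, ← map_pow]
  congr 1
  induction k with
  | zero => simp
  | succ k ih =>
    rw [pow_succ, ih, ← ofAdd_add]
    push_cast
    ring_nf

lemma Tg_conj (k : ℕ) (g : Gn n w) :
    Tg n w φ ^ k * SemidirectProduct.inl g * (Tg n w φ ^ k)⁻¹ =
      SemidirectProduct.inl ((φ ^ k) g) := by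
  rw [Tg_pow]
  have h := SemidirectProduct.inl_aut (φ := zpowersHom (MulAut (Gn n w)) φ)
    (Multiplicative.ofAdd (k : ℤ)) g
  rw [map_inv] at h
  rw [← h]
  congr 1

lemma key2 (hφ : ∀ i : ZMod n, φ (PresentedGroup.of i) = PresentedGroup.of (i + 1)) (k : ℕ) :
    Tg n w φ ^ k * (SemidirectProduct.inl (PresentedGroup.of (0 : ZMod n)) * Tg n w φ) *
      (Tg n w φ ^ (k + 1))⁻¹ = SemidirectProduct.inl (PresentedGroup.of (k : ZMod n)) := by
  calc Tg n w φ ^ k * (SemidirectProduct.inl (PresentedGroup.of (0 : ZMod n)) * Tg n w φ) *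
        (Tg n w φ ^ (k + 1))⁻¹
      = Tg n w φ ^ k * SemidirectProduct.inl (PresentedGroup.of (0 : ZMod n)) *
        (Tg n w φ ^ k)⁻¹ := by group
    _ = SemidirectProduct.inl ((φ ^ k) (PresentedGroup.of (0 : ZMod n))) := Tg_conj n w φ k _
    _ = SemidirectProduct.inl (PresentedGroup.of ((k : ZMod n))) := by
        rw [hφpow n w φ hφ, zero_add]

lemma cyc_rel_one {r : FreeGroup (ZMod n)} (hr : r ∈ cycRels n w) :
    PresentedGroup.mk (cycRels n w) r = 1 :=
  (QuotientGroup.eq_one_iff r).mpr (Subgroup.subset_normalClosure hr)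

lemma fmap_rels (hφ : ∀ i : ZMod n, φ (PresentedGroup.of i) = PresentedGroup.of (i + 1)) :
    ∀ r ∈ twoGenRels n w, FreeGroup.lift (fmap n w φ) r = 1 := by
  have hA : FreeGroup.lift (fmap n w φ) agen =
      SemidirectProduct.inl (PresentedGroup.of (0 : ZMod n)) * Tg n w φ := FreeGroup.lift_apply_of
  have hC : FreeGroup.lift (fmap n w φ) cgen = Tg n w φ := FreeGroup.lift_apply_of
  intro r hr
  rcases Set.mem_insert_iff.mp hr with hr | hr
  · -- the relator W(a,c)
    subst hr
    have hcomp : (FreeGroup.lift (fmap n w φ)).comp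
        (FreeGroup.lift fun i : ZMod n => cgen ^ i.val * agen * (cgen ^ (i.val + 1))⁻¹) =
        (SemidirectProduct.inl (φ := zpowersHom (MulAut (Gn n w)) φ)).comp
          (PresentedGroup.mk (cycRels n w)) := by
      apply FreeGroup.ext_hom
      intro i
      simp only [MonoidHom.comp_apply, FreeGroup.lift_apply_of, map_mul, map_pow, map_inv, hA, hC]
      rw [key2 n w φ hφ]
      have : ((i.val : ZMod n)) = i := by
        rw [ZMod.natCast_val, ZMod.cast_id]
      rw [this]
      rfl
    have h := DFunLike.congr_fun hcomp w
    show FreeGroup.lift (fmap n w φ) (Wword n w) = 1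
    rw [Wword]
    rw [show (FreeGroup.lift (fmap n w φ))
        ((FreeGroup.lift fun i : ZMod n => cgen ^ i.val * agen * (cgen ^ (i.val + 1))⁻¹) w) =
        SemidirectProduct.inl (PresentedGroup.mk (cycRels n w) w) from h]
    have hw : PresentedGroup.mk (cycRels n w) w = 1 := by
      apply cyc_rel_one
      exact ⟨0, by simp⟩
    rw [hw, map_one]
  · -- the commutator relator
    rw [Set.mem_singleton_iff] at hr
    subst hr
    simp only [map_mul, map_inv, map_pow, hA, hC]
    have hcomm : Tg n w φ ^ n * SemidirectProduct.inl (PresentedGroup.of (0 : ZMod n)) *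
        (Tg n w φ ^ n)⁻¹ = SemidirectProduct.inl (PresentedGroup.of (0 : ZMod n)) := by
      rw [Tg_conj n w φ, hφpow n w φ hφ]
      simp
    have hcomm' : (Tg n w φ ^ n)⁻¹ * SemidirectProduct.inl (PresentedGroup.of (0 : ZMod n)) *
        Tg n w φ ^ n = SemidirectProduct.inl (PresentedGroup.of (0 : ZMod n)) := by
      conv_lhs => rw [← hcomm]
      group
    calc (SemidirectProduct.inl (PresentedGroup.of (0 : ZMod n)) * Tg n w φ)⁻¹ *
          (Tg n w φ ^ n)⁻¹ *
          (SemidirectProduct.inl (PresentedGroup.of (0 : ZMod n)) * Tg n w φ) * Tg n w φ ^ n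
        = (Tg n w φ)⁻¹ * (SemidirectProduct.inl (PresentedGroup.of (0 : ZMod n)))⁻¹ *
          ((Tg n w φ ^ n)⁻¹ * SemidirectProduct.inl (PresentedGroup.of (0 : ZMod n)) *
            Tg n w φ ^ n) * Tg n w φ := by group
      _ = 1 := by rw [hcomm']; group

/-- The homomorphism `⟨a,c⟩ →* Ĝ`. -/
def psiH (hφ : ∀ i : ZMod n, φ (PresentedGroup.of i) = PresentedGroup.of (i + 1)) :
    PresentedGroup (twoGenRels n w) →* Ghat n w φ :=
  PresentedGroup.toGroup (fmap_rels n w φ hφ)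

end WithPhi

end HNNAux

theorem natural_HNN_extension_two_generator_presentation
    (n : ℕ) [NeZero n] (w : FreeGroup (ZMod n))
    (φ : MulAut (Gn n w))
    (hφ : ∀ i : ZMod n, φ (PresentedGroup.of i) = PresentedGroup.of (i + 1)) :
    Nonempty ((Gn n w ⋊[zpowersHom (MulAut (Gn n w)) φ] Multiplicative ℤ) ≃*
      PresentedGroup (twoGenRels n w)) := by
  classical
  have hcompat : ∀ z : Multiplicative ℤ,
      (HNNAux.psiG n w).comp ((zpowersHom (MulAut (Gn n w)) φ z)).toMonoidHom =
        (MulAut.conj (zpowersHom (PresentedGroup (twoGenRels n w)) (HNNAux.tc n w) z)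
          ).toMonoidHom.comp (HNNAux.psiG n w) := by
    intro z
    refine MonoidHom.ext fun g => ?_
    simp only [MonoidHom.comp_apply, MulEquiv.coe_toMonoidHom, MulAut.conj_apply,
      zpowersHom_apply]
    rw [← zpow_neg]
    have := HNNAux.psiG_conj_zpow n w φ hφ (Multiplicative.toAdd z) g
    rw [this]
    group
  refine ⟨MonoidHom.toMulEquiv
    (SemidirectProduct.lift (HNNAux.psiG n w)
      (zpowersHom (PresentedGroup (twoGenRels n w)) (HNNAux.tc n w)) hcompat)
    (HNNAux.psiH n w φ hφ) ?_ ?_⟩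
  · -- Ψ ∘ Φ = id
    refine SemidirectProduct.hom_ext ?_ ?_
    · apply PresentedGroup.ext
      intro i
      simp only [MonoidHom.comp_apply, MonoidHom.id_apply]
      rw [show ((SemidirectProduct.inl : Gn n w →* _) (PresentedGroup.of i)) =
        SemidirectProduct.inl (PresentedGroup.of i) from rfl]
      rw [SemidirectProduct.lift_inl, HNNAux.psiG_of]
      simp only [map_mul, map_inv, map_pow]
      have hta : HNNAux.psiH n w φ hφ (HNNAux.ta n w) =
          SemidirectProduct.inl (PresentedGroup.of (0 : ZMod n)) * HNNAux.Tg n w φ := by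
        rw [HNNAux.ta, HNNAux.psiH, PresentedGroup.toGroup.of]
        simp [HNNAux.fmap]
      have htc : HNNAux.psiH n w φ hφ (HNNAux.tc n w) = HNNAux.Tg n w φ := by
        rw [HNNAux.tc, HNNAux.psiH, PresentedGroup.toGroup.of]
        simp [HNNAux.fmap]
      rw [hta, htc, HNNAux.key2 n w φ hφ]
      congr 1
      rw [ZMod.natCast_val, ZMod.cast_id]
    · refine MonoidHom.ext_mint ?_
      simp only [MonoidHom.comp_apply, MonoidHom.id_apply, SemidirectProduct.lift_inr,
        zpowersHom_apply, toAdd_ofAdd, zpow_one]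
      have htc : HNNAux.psiH n w φ hφ (HNNAux.tc n w) = HNNAux.Tg n w φ := by
        rw [HNNAux.tc, HNNAux.psiH, PresentedGroup.toGroup.of]
        simp [HNNAux.fmap]
      rw [htc]
      rfl
  · -- Φ ∘ Ψ = id
    apply PresentedGroup.ext
    intro b
    simp only [MonoidHom.comp_apply, MonoidHom.id_apply]
    have hTg : SemidirectProduct.lift (HNNAux.psiG n w)
        (zpowersHom (PresentedGroup (twoGenRels n w)) (HNNAux.tc n w)) hcompat
        (HNNAux.Tg n w φ) = HNNAux.tc n w := by
      rw [HNNAux.Tg, SemidirectProduct.lift_inr, zpowersHom_apply, toAdd_ofAdd, zpow_one]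
    cases b
    · -- generator c
      have h : HNNAux.psiH n w φ hφ (PresentedGroup.of false) = HNNAux.Tg n w φ := by
        rw [HNNAux.psiH, PresentedGroup.toGroup.of]
        simp [HNNAux.fmap]
      rw [h, hTg]
      rfl
    · -- generator a
      have h : HNNAux.psiH n w φ hφ (PresentedGroup.of true) =
          SemidirectProduct.inl (PresentedGroup.of (0 : ZMod n)) * HNNAux.Tg n w φ := by
        rw [HNNAux.psiH, PresentedGroup.toGroup.of]
        simp [HNNAux.fmap]
      rw [h, map_mul, hTg, SemidirectProduct.lift_inl, HNNAux.psiG_of]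
      rw [show PresentedGroup.of true = HNNAux.ta n w from rfl]
      simp only [ZMod.val_zero]
      group
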